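/- If t ≥ 2 is an integer, b ≥ 0, and t + a + b > 0 with a, b real, then Σ over 1 ≤ j ≤ t−1 with j + a > 0 of C(t, j)·(a + j)^{j−1}·(b + t − j)^{t−j−1} ≤ e⁴·(t + a + b)^{t−1}. -/

import Mathlib

open Finset

set_option linter.deprecated false
set_option linter.unusedTactic false
set_option linter.unreachableTactic false


-- L3
lemma my_choose_mul_pow_le {n M i : ℕ} (h : n ≤ M) :
    n.choose i * M ^ i ≤ M.choose i * n ^ i := by
  have key : n.descFactorial i * M ^ i ≤ M.descFactorial i * n ^ i := by
    have hM : M ^ i = ∏ _r ∈ range i, M := by simp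
    have hn : n ^ i = ∏ _r ∈ range i, n := by simp
    rw [Nat.descFactorial_eq_prod_range, Nat.descFactorial_eq_prod_range, hM, hn,
      ← Finset.prod_mul_distrib, ← Finset.prod_mul_distrib]
    apply Finset.prod_le_prod'
    intro r _
    rcases le_or_gt r n with hr | hr
    · calc (n - r) * M = n * M - r * M := by rw [Nat.sub_mul]
        _ ≤ n * M - r * n := by
            apply Nat.sub_le_sub_left
            exact Nat.mul_le_mul_left r h
        _ = (M - r) * n := by rw [Nat.sub_mul]; ring_nf
    · simp [Nat.sub_eq_zero_of_le hr.le]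
  have e1 := Nat.descFactorial_eq_factorial_mul_choose n i
  have e2 := Nat.descFactorial_eq_factorial_mul_choose M i
  rw [e1, e2, mul_assoc, mul_assoc] at key
  exact Nat.le_of_mul_le_mul_left key (Nat.factorial_pos i)

-- L4
lemma my_one_add_pow_mono {n M : ℕ} (h : n ≤ M) :
    (n+1)^n * M^M ≤ n^n * (M+1)^M := by
  have e : ∀ K : ℕ, (K+1)^K = ∑ i ∈ range (K+1), K^(K-i) * K.choose i := by
    intro K
    have := add_pow 1 (K : ℕ) K
    simpa [one_pow, add_comm] using this
  rw [e n, e M, Finset.sum_mul, Finset.mul_sum]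
  calc ∑ i ∈ range (n+1), n^(n-i) * n.choose i * M^M
      ≤ ∑ i ∈ range (n+1), n^n * (M^(M-i) * M.choose i) := by
        apply Finset.sum_le_sum
        intro i hi
        have hin : i ≤ n := Nat.lt_succ_iff.mp (Finset.mem_range.mp hi)
        have hiM : i ≤ M := hin.trans h
        have h1 : M^M = M^(M-i) * M^i := by rw [← pow_add]; congr 1; omega
        have h2 : n^n = n^(n-i) * n^i := by rw [← pow_add]; congr 1; omega
        calc n^(n-i) * n.choose i * M^M
            = (n^(n-i) * M^(M-i)) * (n.choose i * M^i) := by rw [h1]; ring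
          _ ≤ (n^(n-i) * M^(M-i)) * (M.choose i * n^i) :=
              Nat.mul_le_mul le_rfl (my_choose_mul_pow_le h)
          _ = n^n * (M^(M-i) * M.choose i) := by rw [h2]; ring
    _ ≤ ∑ i ∈ range (M+1), n^n * (M^(M-i) * M.choose i) := by
        apply Finset.sum_le_sum_of_subset
        exact Finset.range_subset_range.mpr (by omega)


-- L5
lemma my_step5 {m n : ℕ} (h : m ≤ n) :
    (m+n+1).choose m * (n+1)^(n+1) * (m+n)^(m+n) ≤ (m+n).choose m * n^n * (m+n+1)^(m+n+1) := by
  have key : (m+n).choose m * (m+n+1) = (m+n+1).choose m * (n+1) := by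
    have h2 := Nat.choose_mul_succ_eq (m+n) m
    rw [show m+n+1-m = n+1 by omega] at h2
    exact h2
  calc (m+n+1).choose m * (n+1)^(n+1) * (m+n)^(m+n)
      = ((m+n+1).choose m * (n+1)) * ((n+1)^n * (m+n)^(m+n)) := by rw [pow_succ]; ring
    _ = ((m+n).choose m * (m+n+1)) * ((n+1)^n * (m+n)^(m+n)) := by rw [key]
    _ ≤ ((m+n).choose m * (m+n+1)) * (n^n * (m+n+1)^(m+n)) :=
        Nat.mul_le_mul le_rfl (my_one_add_pow_mono (Nat.le_add_left n m))
    _ = (m+n).choose m * n^n * (m+n+1)^(m+n+1) := by rw [pow_succ]; ring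

-- L6
lemma my_reduce_central {m : ℕ} (hm : 1 ≤ m) : ∀ n, m ≤ n →
    (m+n).choose m * n^n * (2*m)^(2*m) ≤ (2*m).choose m * m^m * (m+n)^(m+n) := by
  intro n hn
  induction n, hn using Nat.le_induction with
  | base => rw [two_mul]
  | succ n hn ih =>
    have hpos : 0 < (m+n)^(m+n) := pow_pos (by omega) _
    apply Nat.le_of_mul_le_mul_right _ hpos
    calc (m+(n+1)).choose m * (n+1)^(n+1) * (2*m)^(2*m) * (m+n)^(m+n)
        = ((m+n+1).choose m * (n+1)^(n+1) * (m+n)^(m+n)) * (2*m)^(2*m) := by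
          rw [show m+(n+1) = m+n+1 by omega]; ring
      _ ≤ ((m+n).choose m * n^n * (m+n+1)^(m+n+1)) * (2*m)^(2*m) :=
          Nat.mul_le_mul (my_step5 hn) le_rfl
      _ = ((m+n).choose m * n^n * (2*m)^(2*m)) * (m+n+1)^(m+n+1) := by ring
      _ ≤ ((2*m).choose m * m^m * (m+n)^(m+n)) * (m+n+1)^(m+n+1) :=
          Nat.mul_le_mul ih le_rfl
      _ = (2*m).choose m * m^m * (m+(n+1))^(m+(n+1)) * (m+n)^(m+n) := by
          rw [show m+(n+1) = m+n+1 by omega]; ring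

-- L2
lemma my_central (m : ℕ) : (3*m+1) * ((2*m).choose m)^2 ≤ 16^m := by
  induction m with
  | zero => simp
  | succ m ih =>
    have key : (m+1)^2 * (2*(m+1)).choose (m+1) = (2*m+2)*(2*m+1) * (2*m).choose m := by
      have h1 := Nat.add_one_mul_choose_eq (2*m+1) m
      have h2 := Nat.add_one_mul_choose_eq (2*m) m
      have h3 : (2*m+1).choose (m+1) = (2*m+1).choose m := Nat.choose_symm_half m
      -- h1 : (2m+2) * C(2m+1, m) = C(2m+2, m+1) * (m+1)
      -- h2 : (2m+1) * C(2m, m) = C(2m+1, m+1) * (m+1)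
      rw [show 2*(m+1) = 2*m+1+1 by omega]
      calc (m+1)^2 * (2*m+1+1).choose (m+1)
          = (m+1) * ((2*m+1+1).choose (m+1) * (m+1)) := by ring
        _ = (m+1) * (Nat.succ (2*m+1) * (2*m+1).choose m) := by rw [h1]
        _ = (2*m+2) * ((2*m+1).choose (m+1) * (m+1)) := by rw [h3]; simp [Nat.succ_eq_add_one]; ring
        _ = (2*m+2) * (Nat.succ (2*m) * (2*m).choose m) := by rw [h2]
        _ = (2*m+2)*(2*m+1) * (2*m).choose m := by simp [Nat.succ_eq_add_one]; ring
    have hpoly : (3*m+4)*((2*m+2)*(2*m+1))^2 ≤ (3*m+1)*((m+1)^2)^2*16 := by nlinarith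
    apply Nat.le_of_mul_le_mul_left _ (show 0 < (3*m+1)*((m+1)^2)^2 by positivity)
    calc (3*m+1)*((m+1)^2)^2 * ((3*(m+1)+1) * ((2*(m+1)).choose (m+1))^2)
        = (3*m+1) * ((3*m+4) * ((m+1)^2 * (2*(m+1)).choose (m+1))^2) := by ring
      _ = (3*m+1) * ((3*m+4) * ((2*m+2)*(2*m+1) * (2*m).choose m)^2) := by rw [key]
      _ = ((3*m+4)*((2*m+2)*(2*m+1))^2) * ((3*m+1) * ((2*m).choose m)^2) := by ring
      _ ≤ ((3*m+1)*((m+1)^2)^2*16) * 16^m := Nat.mul_le_mul hpoly ih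
      _ = (3*m+1)*((m+1)^2)^2 * 16^(m+1) := by rw [pow_succ]; ring


lemma my_pow_identity (m : ℕ) : ((2*m)^(2*m))^2 = 16^m * ((m^m)^2)^2 := by
  rw [mul_pow, mul_pow, ← pow_mul, ← pow_mul, ← pow_mul, ← pow_mul,
    show (16:ℕ) = 2^4 by norm_num, ← pow_mul]
  congr 1 <;> ring

lemma my_gsq_aux {m n : ℕ} (hm : 1 ≤ m) (hn : m ≤ n) :
    (3*m+1) * ((m+n).choose m * m^m * n^n)^2 ≤ ((m+n)^(m+n))^2 := by
  have hpos : 0 < ((2*m)^(2*m))^2 := by positivity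
  apply Nat.le_of_mul_le_mul_right _ hpos
  have h6 := my_reduce_central hm n hn
  have h2 := my_central m
  calc (3*m+1) * ((m+n).choose m * m^m * n^n)^2 * ((2*m)^(2*m))^2
      = (3*m+1) * (m^m)^2 * ((m+n).choose m * n^n * (2*m)^(2*m))^2 := by ring
    _ ≤ (3*m+1) * (m^m)^2 * ((2*m).choose m * m^m * (m+n)^(m+n))^2 :=
        Nat.mul_le_mul le_rfl (Nat.pow_le_pow_left h6 2)
    _ = ((3*m+1) * ((2*m).choose m)^2) * ((m^m)^2)^2 * ((m+n)^(m+n))^2 := by ring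
    _ ≤ 16^m * ((m^m)^2)^2 * ((m+n)^(m+n))^2 :=
        Nat.mul_le_mul (Nat.mul_le_mul h2 le_rfl) le_rfl
    _ = ((m+n)^(m+n))^2 * ((2*m)^(2*m))^2 := by rw [my_pow_identity]; ring

lemma my_gsq {m n : ℕ} (hm : 1 ≤ m) (hn : 1 ≤ n) :
    (3*(min m n)+1) * ((m+n).choose m * m^m * n^n)^2 ≤ ((m+n)^(m+n))^2 := by
  rcases le_total m n with h | h
  · rw [min_eq_left h]; exact my_gsq_aux hm h
  · rw [min_eq_right h]
    have hsymm : (m+n).choose m = (m+n).choose n := by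
      have := Nat.choose_symm (Nat.le_add_left n m)
      rwa [Nat.add_sub_cancel] at this
    have := my_gsq_aux hn h
    rw [hsymm, show m+n = n+m by ring]
    calc (3*n+1) * ((n+m).choose n * m^m * n^n)^2
        = (3*n+1) * ((n+m).choose n * n^n * m^m)^2 := by ring
      _ ≤ ((n+m)^(n+m))^2 := this

lemma my_g_sqrt {m n : ℕ} (hm : 1 ≤ m) (hn : 1 ≤ n) :
    Real.sqrt (3*(min m n : ℝ)+1) * (((m+n).choose m : ℝ) * (m:ℝ)^m * (n:ℝ)^n) ≤ ((m+n:ℕ):ℝ)^(m+n) := by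
  set Z : ℝ := ((m+n).choose m : ℝ) * (m:ℝ)^m * (n:ℝ)^n with hZdef
  have hZ : (0:ℝ) ≤ Z := by positivity
  have hW : (0:ℝ) ≤ ((m+n:ℕ):ℝ)^(m+n) := by positivity
  have hc : (3*(min m n : ℝ)+1) * Z^2 ≤ (((m+n:ℕ):ℝ)^(m+n))^2 := by
    have h := my_gsq hm hn
    have := (Nat.cast_le (α := ℝ)).mpr h
    push_cast at this ⊢
    convert this using 2 <;> push_cast <;> ring
  calc Real.sqrt (3*(min m n : ℝ)+1) * Z
      = Real.sqrt ((3*(min m n : ℝ)+1) * Z^2) := by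
        rw [Real.sqrt_mul (by positivity), Real.sqrt_sq hZ]
    _ ≤ Real.sqrt ((((m+n:ℕ):ℝ)^(m+n))^2) := Real.sqrt_le_sqrt hc
    _ = ((m+n:ℕ):ℝ)^(m+n) := Real.sqrt_sq hW


-- AM-GM for natural exponents
lemma my_amgm {x y : ℝ} (hx : 0 ≤ x) (hy : 0 ≤ y) (p q : ℕ) :
    ((p+q : ℕ):ℝ)^(p+q) * (x^p * y^q) ≤ (p:ℝ)^p * (q:ℝ)^q * (x+y)^(p+q) := by
  rcases Nat.eq_zero_or_pos p with hp | hp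
  · subst hp
    simp only [Nat.cast_zero, pow_zero, one_mul, Nat.zero_add, zero_add, Nat.cast_id]
    push_cast
    exact mul_le_mul_of_nonneg_left (pow_le_pow_left₀ hy (le_add_of_nonneg_left hx) q)
      (by positivity)
  rcases Nat.eq_zero_or_pos q with hq | hq
  · subst hq
    simp only [Nat.cast_zero, pow_zero, mul_one, Nat.add_zero, add_zero]
    push_cast
    exact mul_le_mul_of_nonneg_left (pow_le_pow_left₀ hx (le_add_of_nonneg_right hy) p)
      (by positivity)
  have hP : (0:ℝ) < p := by exact_mod_cast hp
  have hQ : (0:ℝ) < q := by exact_mod_cast hq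
  have hT : (0:ℝ) < (p:ℝ) + q := by linarith
  set w1 : ℝ := p / (p + q) with hw1
  set w2 : ℝ := q / (p + q) with hw2
  set z1 : ℝ := ((p:ℝ)+q) * x / p with hz1
  set z2 : ℝ := ((p:ℝ)+q) * y / q with hz2
  have hz1n : 0 ≤ z1 := by positivity
  have hz2n : 0 ≤ z2 := by positivity
  have hgm := Real.geom_mean_le_arith_mean2_weighted
    (by positivity : (0:ℝ) ≤ w1) (by positivity : (0:ℝ) ≤ w2) hz1n hz2n
    (by rw [hw1, hw2]; field_simp : w1 + w2 = 1)
  have hsum : w1 * z1 + w2 * z2 = x + y := by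
    rw [hw1, hw2, hz1, hz2]; field_simp
  rw [hsum] at hgm
  have hpow := pow_le_pow_left₀ (by positivity) hgm (p+q)
  have hlhs : (z1 ^ w1 * z2 ^ w2) ^ (p+q) = z1^p * z2^q := by
    rw [mul_pow, ← Real.rpow_natCast (z1 ^ w1) (p+q), ← Real.rpow_natCast (z2 ^ w2) (p+q),
      ← Real.rpow_mul hz1n, ← Real.rpow_mul hz2n]
    have e1 : w1 * ((p+q:ℕ):ℝ) = (p:ℕ) := by rw [hw1]; push_cast; field_simp
    have e2 : w2 * ((p+q:ℕ):ℝ) = (q:ℕ) := by rw [hw2]; push_cast; field_simp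
    rw [e1, e2, Real.rpow_natCast, Real.rpow_natCast]
  rw [hlhs] at hpow
  have hz1e : z1^p = ((p:ℝ)+q)^p * x^p / (p:ℝ)^p := by rw [hz1, div_pow, mul_pow]
  have hz2e : z2^q = ((p:ℝ)+q)^q * y^q / (q:ℝ)^q := by rw [hz2, div_pow, mul_pow]
  rw [hz1e, hz2e] at hpow
  have hcast : ((p+q : ℕ):ℝ) = (p:ℝ) + q := by push_cast; ring
  rw [hcast, pow_add ((p:ℝ)+q)]
  calc ((p:ℝ)+q)^p * ((p:ℝ)+q)^q * (x^p * y^q)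
      = (((p:ℝ)+q)^p * x^p / (p:ℝ)^p) * (((p:ℝ)+q)^q * y^q / (q:ℝ)^q) * ((p:ℝ)^p * (q:ℝ)^q) := by
        field_simp
    _ ≤ (x+y)^(p+q) * ((p:ℝ)^p * (q:ℝ)^q) := by
        apply mul_le_mul_of_nonneg_right hpow (by positivity)
    _ = (p:ℝ)^p * (q:ℝ)^q * (x+y)^(p+q) := by ring

-- telescoping sum
lemma my_telescope_aux : ∀ N, 1 ≤ N → ∑ k ∈ range N, (1:ℝ)/(((k:ℝ)+1) * Real.sqrt ((k:ℝ)+1)) ≤ 3 - 2/Real.sqrt N := by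
  intro N hN
  induction N, hN using Nat.le_induction with
  | base => simp [Real.sqrt_one]; norm_num
  | succ N hN ih =>
    rw [Finset.sum_range_succ]
    have hu : (1:ℝ) ≤ Real.sqrt N := by
      rw [show (1:ℝ) = Real.sqrt 1 by simp]
      exact Real.sqrt_le_sqrt (by exact_mod_cast hN)
    have hu0 : (0:ℝ) < Real.sqrt N := by linarith
    have hv0 : (0:ℝ) < Real.sqrt ((N:ℝ)+1) := Real.sqrt_pos.mpr (by positivity)
    have huv : Real.sqrt N ≤ Real.sqrt ((N:ℝ)+1) := Real.sqrt_le_sqrt (by linarith)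
    have hu2 : Real.sqrt N * Real.sqrt N = N := Real.mul_self_sqrt (by positivity)
    have hv2 : Real.sqrt ((N:ℝ)+1) * Real.sqrt ((N:ℝ)+1) = (N:ℝ)+1 :=
      Real.mul_self_sqrt (by positivity)
    have key : (1:ℝ)/(((N:ℝ)+1) * Real.sqrt ((N:ℝ)+1)) ≤ 2/Real.sqrt N - 2/Real.sqrt ((N:ℝ)+1) := by
      set u := Real.sqrt N
      set v := Real.sqrt ((N:ℝ)+1)
      rw [div_sub_div _ _ (ne_of_gt hu0) (ne_of_gt hv0), div_le_div_iff₀ (by positivity) (by positivity)]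
      have hdiff : (v - u) * (v + u) = 1 := by nlinarith
      apply le_of_mul_le_mul_right _ (show (0:ℝ) < u + v by linarith)
      calc 1 * (u * v) * (u + v) = u*u*v + u*(v*v) := by ring
        _ ≤ ((N:ℝ)+1)*v + v*((N:ℝ)+1) := by
            have e1 : u*u*v ≤ ((N:ℝ)+1)*v := by nlinarith
            have e2 : u*(v*v) ≤ v*((N:ℝ)+1) := by nlinarith
            linarith
        _ = 2*((N:ℝ)+1)*v := by ring
        _ = (2*v - u*2) * (((N:ℝ)+1) * v) * (u + v) := by
            have h9 : (2*v - u*2) * (((N:ℝ)+1) * v) * (u + v)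
                = 2*((v-u)*(v+u))*(((N:ℝ)+1)*v) := by ring
            rw [h9, hdiff]; ring
    have hcast : ((N:ℕ):ℝ) + 1 = ((N+1 : ℕ):ℝ) := by push_cast; ring
    calc (∑ k ∈ range N, (1:ℝ)/(((k:ℝ)+1) * Real.sqrt ((k:ℝ)+1))) + (1:ℝ)/(((N:ℝ)+1) * Real.sqrt ((N:ℝ)+1))
        ≤ (3 - 2/Real.sqrt N) + (2/Real.sqrt N - 2/Real.sqrt ((N:ℝ)+1)) := add_le_add ih key
      _ = 3 - 2/Real.sqrt ((N+1:ℕ):ℝ) := by rw [← hcast]; ring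

lemma my_telescope (N : ℕ) : ∑ k ∈ range N, (1:ℝ)/(((k:ℝ)+1) * Real.sqrt ((k:ℝ)+1)) ≤ 3 := by
  rcases Nat.eq_zero_or_pos N with h | h
  · subst h; simp
  · have := my_telescope_aux N h
    have h2 : 0 ≤ 2/Real.sqrt N := by positivity
    linarith


noncomputable def myf : ℕ → ℝ := fun k => 1/((k:ℝ) * Real.sqrt (k:ℝ))

lemma myf_nonneg (k : ℕ) : 0 ≤ myf k := by unfold myf; positivity

lemma my_reindex1 (t : ℕ) (ht : 2 ≤ t) :
    ∑ j ∈ Ioo 1 t, myf (j-1) = ∑ k ∈ range (t-2), myf (k+1) := by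
  apply Finset.sum_nbij' (i := fun j => j - 2) (j := fun k => k + 2)
  · intro a ha; simp only [Finset.mem_Ioo] at ha; simp only [Finset.mem_range]; omega
  · intro a ha; simp only [Finset.mem_range] at ha; simp only [Finset.mem_Ioo]; omega
  · intro a ha; simp only [Finset.mem_Ioo] at ha; omega
  · intro a ha; simp only [Finset.mem_range] at ha; omega
  · intro a ha; simp only [Finset.mem_Ioo] at ha
    congr 1; omega

lemma my_reindex2 (t : ℕ) (ht : 2 ≤ t) :
    ∑ j ∈ Ioo 1 t, myf (t-j) = ∑ k ∈ range (t-2), myf (k+1) := by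
  apply Finset.sum_nbij' (i := fun j => t - j - 1) (j := fun k => t - k - 1)
  · intro a ha; simp only [Finset.mem_Ioo] at ha; simp only [Finset.mem_range]; omega
  · intro a ha; simp only [Finset.mem_range] at ha; simp only [Finset.mem_Ioo]; omega
  · intro a ha; simp only [Finset.mem_Ioo] at ha; omega
  · intro a ha; simp only [Finset.mem_range] at ha; omega
  · intro a ha; simp only [Finset.mem_Ioo] at ha
    congr 1; omega

lemma my_sqrt3 : (2:ℝ)/Real.sqrt 3 ≤ 7/6 := by
  have h0 : (0:ℝ) ≤ 3 := by norm_num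
  have hs := Real.sq_sqrt h0
  have hsn : (0:ℝ) ≤ Real.sqrt 3 := Real.sqrt_nonneg 3
  have h127 : (12:ℝ)/7 ≤ Real.sqrt 3 := by nlinarith
  rw [div_le_div_iff₀ (by nlinarith) (by norm_num)]
  nlinarith

lemma my_nine_le_exp : (9:ℝ) ≤ Real.exp 4 := by
  have h2 : (2:ℝ) ≤ Real.exp 1 := by
    have := Real.add_one_le_exp 1
    linarith
  have : Real.exp 4 = (Real.exp 1)^4 := by
    rw [← Real.exp_nat_mul]; norm_num
  rw [this]
  calc (9:ℝ) ≤ 2^4 := by norm_num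
    _ ≤ (Real.exp 1)^4 := pow_le_pow_left₀ (by norm_num) h2 4



-- per-term bound for j = 1
lemma my_key1 (t : ℕ) (ht : 2 ≤ t) (a b : ℝ) (hb : 0 ≤ b) (hxa : 0 ≤ a + (1:ℝ)) :
    (t.choose 1 : ℝ) * (a + (1:ℕ))^(1-1) * (b + t - (1:ℕ))^(t-1-1) ≤
      2 * ((t:ℝ)+a+b)^(t-1) := by
  have ht2 : (2:ℝ) ≤ t := by exact_mod_cast ht
  have ht1 : (0:ℝ) < (t:ℝ) - 1 := by linarith
  set y := b + (t:ℝ) - (1:ℕ) with hydef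
  set S := (t:ℝ) + a + b with hSdef
  have hyt : (t:ℝ) - 1 ≤ y := by rw [hydef]; push_cast; linarith
  have hy0 : 0 < y := lt_of_lt_of_le ht1 hyt
  have hyS : y ≤ S := by rw [hydef, hSdef]; push_cast; linarith
  rw [Nat.choose_one_right, show (1:ℕ)-1 = 0 from rfl, pow_zero, mul_one]
  apply le_of_mul_le_mul_right _ ht1
  have hyy : y^(t-1-1) * ((t:ℝ)-1) ≤ y^(t-1) := by
    calc y^(t-1-1) * ((t:ℝ)-1) ≤ y^(t-1-1) * y :=
          mul_le_mul_of_nonneg_left hyt (pow_nonneg hy0.le _)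
      _ = y^(t-1) := by rw [← pow_succ]; congr 1; omega
  calc (t:ℝ) * y^(t-1-1) * ((t:ℝ)-1) = (t:ℝ) * (y^(t-1-1) * ((t:ℝ)-1)) := by ring
    _ ≤ (t:ℝ) * y^(t-1) := mul_le_mul_of_nonneg_left hyy (by positivity)
    _ ≤ (2*((t:ℝ)-1)) * S^(t-1) := by
        apply mul_le_mul (by linarith) (pow_le_pow_left₀ hy0.le hyS _) (by positivity) (by linarith)
    _ = 2 * S^(t-1) * ((t:ℝ)-1) := by ring

-- per-term bound for j ≥ 2
lemma my_key2 (t : ℕ) (ht : 2 ≤ t) (a b : ℝ) (hb : 0 ≤ b) (j : ℕ)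
    (hj1 : 1 < j) (hj2 : j < t) (hxa : 0 ≤ a + (j:ℝ)) :
    (t.choose j : ℝ) * (a + (j:ℝ))^(j-1) * (b + (t:ℝ) - (j:ℝ))^(t-j-1) ≤
      ((2/Real.sqrt 3) * (myf (j-1) + myf (t-j))) * ((t:ℝ)+a+b)^(t-1) := by
  set m := j - 1 with hmdef
  set n := t - j with hndef
  have hm : 1 ≤ m := by omega
  have hn : 1 ≤ n := by omega
  have hjm : j = m + 1 := by omega
  have hmn : m + n = t - 1 := by omega
  set x := a + (j:ℝ) with hxdef
  set y := b + (t:ℝ) - (j:ℝ) with hydef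
  set S := (t:ℝ) + a + b with hSdef
  have hxy : x + y = S := by rw [hxdef, hydef, hSdef]; ring
  have hncast : (n:ℝ) = (t:ℝ) - (j:ℝ) := by
    rw [hndef]; push_cast [Nat.cast_sub hj2.le]; ring
  have hyn : (n:ℝ) ≤ y := by rw [hydef, hncast]; linarith
  have hn0 : (0:ℝ) < n := by exact_mod_cast hn
  have hy0 : 0 < y := lt_of_lt_of_le hn0 hyn
  have hS0 : 0 ≤ S := by rw [← hxy]; linarith
  have hj0 : (0:ℝ) < j := by positivity
  have hm0 : (0:ℝ) < m := by exact_mod_cast hm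
  have hW0 : (0:ℝ) < ((t-1:ℕ):ℝ)^(t-1) := by
    have : (0:ℕ) < t - 1 := by omega
    positivity
  set D := Real.sqrt (3*(min m n : ℝ)+1) with hDdef
  have hD0 : 0 < D := Real.sqrt_pos.mpr (by positivity)
  set C' := ((t-1).choose m : ℝ) with hC'def
  have hC'0 : 0 ≤ C' := by positivity
  -- (i)
  have hi : y^(n-1) * (n:ℝ) ≤ y^n := by
    calc y^(n-1) * (n:ℝ) ≤ y^(n-1) * y :=
          mul_le_mul_of_nonneg_left hyn (pow_nonneg hy0.le _)
      _ = y^n := by rw [← pow_succ]; congr 1; omega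
  -- (ii)
  have hii : ((t-1:ℕ):ℝ)^(t-1) * (x^m * y^n) ≤ (m:ℝ)^m * (n:ℝ)^n * S^(t-1) := by
    have h := my_amgm hxa hy0.le m n
    rw [hmn, hxy] at h
    exact h
  -- (iii)
  have hiii : D * (C' * (m:ℝ)^m * (n:ℝ)^n) ≤ ((t-1:ℕ):ℝ)^(t-1) := by
    have h := my_g_sqrt hm hn
    rw [hmn] at h
    exact h
  -- choose identity
  have hC : (t.choose j : ℝ) * (j:ℝ) = (t:ℝ) * C' := by
    have h := Nat.add_one_mul_choose_eq (t-1) m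
    rw [show t - 1 + 1 = t by omega, show m + 1 = j by omega] at h
    rw [hC'def]
    exact_mod_cast h.symm
  -- main multiplied chain
  have main : ((t.choose j:ℝ) * x^m * y^(n-1)) * ((j:ℝ) * (n:ℝ) * D) * ((t-1:ℕ):ℝ)^(t-1)
      ≤ ((t:ℝ) * S^(t-1)) * ((t-1:ℕ):ℝ)^(t-1) := by
    calc ((t.choose j:ℝ) * x^m * y^(n-1)) * ((j:ℝ) * (n:ℝ) * D) * ((t-1:ℕ):ℝ)^(t-1)
        = ((t.choose j:ℝ)*(j:ℝ)) * ((y^(n-1)*(n:ℝ)) * (x^m * D * ((t-1:ℕ):ℝ)^(t-1))) := by ring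
      _ = ((t:ℝ)*C') * ((y^(n-1)*(n:ℝ)) * (x^m * D * ((t-1:ℕ):ℝ)^(t-1))) := by rw [hC]
      _ ≤ ((t:ℝ)*C') * (y^n * (x^m * D * ((t-1:ℕ):ℝ)^(t-1))) := by
          apply mul_le_mul_of_nonneg_left _ (by positivity)
          apply mul_le_mul_of_nonneg_right hi (by positivity)
      _ = (t:ℝ) * (((t-1:ℕ):ℝ)^(t-1) * (x^m * y^n)) * (C' * D) := by ring
      _ ≤ (t:ℝ) * ((m:ℝ)^m * (n:ℝ)^n * S^(t-1)) * (C' * D) := by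
          apply mul_le_mul_of_nonneg_right _ (by positivity)
          exact mul_le_mul_of_nonneg_left hii (by positivity)
      _ = ((t:ℝ) * S^(t-1)) * (D * (C' * (m:ℝ)^m * (n:ℝ)^n)) := by ring
      _ ≤ ((t:ℝ) * S^(t-1)) * ((t-1:ℕ):ℝ)^(t-1) := by
          apply mul_le_mul_of_nonneg_left hiii (by positivity)
  have main2 : ((t.choose j:ℝ) * x^m * y^(n-1)) * ((j:ℝ) * (n:ℝ) * D) ≤ (t:ℝ) * S^(t-1) :=
    le_of_mul_le_mul_right main hW0
  -- numeric bound
  have hnum : (t:ℝ) ≤ ((2/Real.sqrt 3) * (myf m + myf n)) * ((j:ℝ)*(n:ℝ)*D) := by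
    rcases le_total m n with hcase | hcase
    · have hmin : min (m:ℝ) (n:ℝ) = (m:ℝ) := min_eq_left (by exact_mod_cast hcase)
      set s := Real.sqrt (m:ℝ) with hs
      have hs0 : 0 < s := Real.sqrt_pos.mpr hm0
      have hss : s * s = (m:ℝ) := Real.mul_self_sqrt hm0.le
      have hDge : Real.sqrt 3 * s ≤ D := by
        rw [hDdef, hmin, ← Real.sqrt_mul (by norm_num : (0:ℝ) ≤ 3) (m:ℝ)]
        exact Real.sqrt_le_sqrt (by linarith)
      have e : (2/Real.sqrt 3) * myf m * ((j:ℝ)*(n:ℝ)*(Real.sqrt 3*s)) = 2*(j:ℝ)*(n:ℝ)/(m:ℝ) := by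
        unfold myf
        rw [← hs, ← hss]
        have h3 : (0:ℝ) < Real.sqrt 3 := by positivity
        field_simp
      calc (t:ℝ) ≤ 2*(j:ℝ)*(n:ℝ)/(m:ℝ) := by
            rw [le_div_iff₀ hm0]
            have hnat : t * m ≤ 2*(j*n) := by
              have h1 : m*m ≤ m*n := Nat.mul_le_mul_left m hcase
              have ht' : t = m+n+1 := by omega
              have hj' : j = m+1 := by omega
              rw [ht', hj']
              nlinarith [h1, hcase]
            calc (t:ℝ) * m ≤ (2:ℝ)*(j*n) := by exact_mod_cast hnat
              _ = 2*(j:ℝ)*(n:ℝ) := by push_cast; ring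
        _ = (2/Real.sqrt 3) * myf m * ((j:ℝ)*(n:ℝ)*(Real.sqrt 3*s)) := e.symm
        _ ≤ ((2/Real.sqrt 3) * (myf m + myf n)) * ((j:ℝ)*(n:ℝ)*D) := by
            apply mul_le_mul
            · exact mul_le_mul_of_nonneg_left (le_add_of_nonneg_right (myf_nonneg n)) (by positivity)
            · exact mul_le_mul_of_nonneg_left hDge (by positivity)
            · positivity
            · have := myf_nonneg m; have := myf_nonneg n; positivity
    · have hmin : min (m:ℝ) (n:ℝ) = (n:ℝ) := min_eq_right (by exact_mod_cast hcase)
      set s := Real.sqrt (n:ℝ) with hs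
      have hs0 : 0 < s := Real.sqrt_pos.mpr hn0
      have hss : s * s = (n:ℝ) := Real.mul_self_sqrt hn0.le
      have hDge : Real.sqrt 3 * s ≤ D := by
        rw [hDdef, hmin, ← Real.sqrt_mul (by norm_num : (0:ℝ) ≤ 3) (n:ℝ)]
        exact Real.sqrt_le_sqrt (by linarith)
      have e : (2/Real.sqrt 3) * myf n * ((j:ℝ)*(n:ℝ)*(Real.sqrt 3*s)) = 2*(j:ℝ) := by
        unfold myf
        rw [← hs, ← hss]
        have h3 : (0:ℝ) < Real.sqrt 3 := by positivity
        field_simp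
      calc (t:ℝ) ≤ 2*(j:ℝ) := by
            have hnat : t ≤ 2*j := by omega
            exact_mod_cast hnat
        _ = (2/Real.sqrt 3) * myf n * ((j:ℝ)*(n:ℝ)*(Real.sqrt 3*s)) := e.symm
        _ ≤ ((2/Real.sqrt 3) * (myf m + myf n)) * ((j:ℝ)*(n:ℝ)*D) := by
            apply mul_le_mul
            · exact mul_le_mul_of_nonneg_left (le_add_of_nonneg_left (myf_nonneg m)) (by positivity)
            · exact mul_le_mul_of_nonneg_left hDge (by positivity)
            · positivity
            · have := myf_nonneg m; have := myf_nonneg n; positivity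
  -- conclude
  have hjnD : (0:ℝ) < (j:ℝ)*(n:ℝ)*D := by positivity
  apply le_of_mul_le_mul_right _ hjnD
  calc (t.choose j:ℝ) * x^m * y^(n-1) * ((j:ℝ)*(n:ℝ)*D)
      ≤ (t:ℝ) * S^(t-1) := main2
    _ ≤ (((2/Real.sqrt 3) * (myf m + myf n)) * ((j:ℝ)*(n:ℝ)*D)) * S^(t-1) := by
        apply mul_le_mul_of_nonneg_right hnum (by positivity)
    _ = ((2/Real.sqrt 3) * (myf m + myf n)) * S^(t-1) * ((j:ℝ)*(n:ℝ)*D) := by ring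


lemma my_telescope' (N : ℕ) : ∑ k ∈ range N, myf (k+1) ≤ 3 := by
  have h := my_telescope N
  calc ∑ k ∈ range N, myf (k+1)
      = ∑ k ∈ range N, (1:ℝ)/(((k:ℝ)+1) * Real.sqrt ((k:ℝ)+1)) := by
        apply Finset.sum_congr rfl
        intro k _
        unfold myf
        norm_num
    _ ≤ 3 := h

theorem stmt11 (t : ℕ) (ht : 2 ≤ t) (a b : ℝ) (hb : 0 ≤ b) (htab : 0 < t + a + b) :
    ∑ j ∈ (Finset.Ioo 0 t).filter (fun j : ℕ => 0 < (j : ℝ) + a),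
        (t.choose j : ℝ) * (a + (j : ℝ)) ^ (j - 1) * (b + (t : ℝ) - (j : ℝ)) ^ (t - j - 1) ≤
      Real.exp 4 * ((t : ℝ) + a + b) ^ (t - 1) := by
  have hS0 : (0:ℝ) ≤ (t:ℝ) + a + b := le_of_lt htab
  have hSpow : (0:ℝ) ≤ ((t:ℝ) + a + b)^(t-1) := pow_nonneg hS0 _
  set B : ℕ → ℝ := fun j => if j = 1 then (2:ℝ) else (2/Real.sqrt 3) * (myf (j-1) + myf (t-j))
    with hBdef
  have hB0 : ∀ j, 0 ≤ B j := by
    intro j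
    rw [hBdef]
    by_cases h : j = 1
    · simp [h]
    · simp only [h, if_false]
      have := myf_nonneg (j-1); have := myf_nonneg (t-j)
      positivity
  have hkey : ∀ j ∈ (Finset.Ioo 0 t).filter (fun j : ℕ => 0 < (j : ℝ) + a),
      (t.choose j : ℝ) * (a + (j : ℝ)) ^ (j - 1) * (b + (t : ℝ) - (j : ℝ)) ^ (t - j - 1) ≤
        B j * ((t:ℝ) + a + b)^(t-1) := by
    intro j hj
    rw [Finset.mem_filter, Finset.mem_Ioo] at hj
    obtain ⟨⟨hj1, hj2⟩, hja⟩ := hj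
    have hxa : 0 ≤ a + (j:ℝ) := by linarith
    by_cases h1 : j = 1
    · subst h1
      rw [hBdef]
      simp only [if_pos rfl]
      have := my_key1 t ht a b hb (by push_cast at hxa ⊢; linarith)
      push_cast at this ⊢
      convert this using 3 <;> norm_num
    · rw [hBdef]
      simp only [h1, if_false]
      exact my_key2 t ht a b hb j (by omega) hj2 hxa
  have hsplit : Finset.Ioo 0 t = insert 1 (Finset.Ioo 1 t) := by
    rw [Finset.Ioo_insert_left (by omega : 1 < t)]
    exact (Finset.Ico_add_one_left_eq_Ioo 0 t).symm
  have hsumB : ∑ j ∈ Finset.Ioo 0 t, B j ≤ 9 := by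
    rw [hsplit, Finset.sum_insert (by simp)]
    have hB1 : B 1 = 2 := by simp [hBdef]
    have hterm : ∀ j ∈ Finset.Ioo 1 t, B j = (2/Real.sqrt 3) * (myf (j-1) + myf (t-j)) := by
      intro j hj
      rw [Finset.mem_Ioo] at hj
      simp [hBdef, show j ≠ 1 by omega]
    have hrest : ∑ j ∈ Finset.Ioo 1 t, B j
        = (2/Real.sqrt 3) * ((∑ j ∈ Finset.Ioo 1 t, myf (j-1)) + ∑ j ∈ Finset.Ioo 1 t, myf (t-j)) := by
      rw [Finset.sum_congr rfl hterm, ← Finset.mul_sum, Finset.sum_add_distrib]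
    rw [hB1, hrest, my_reindex1 t ht, my_reindex2 t ht]
    have htel := my_telescope' (t-2)
    have h37 := my_sqrt3
    have hpos : (0:ℝ) ≤ 2/Real.sqrt 3 := by positivity
    have hsum6 : (∑ k ∈ range (t-2), myf (k+1)) + (∑ k ∈ range (t-2), myf (k+1)) ≤ 6 := by
      linarith
    have hsumnn : (0:ℝ) ≤ (∑ k ∈ range (t-2), myf (k+1)) + (∑ k ∈ range (t-2), myf (k+1)) := by
      have : ∀ k ∈ range (t-2), (0:ℝ) ≤ myf (k+1) := fun k _ => myf_nonneg (k+1)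
      have h := Finset.sum_nonneg this
      linarith
    calc 2 + (2/Real.sqrt 3) * ((∑ k ∈ range (t-2), myf (k+1)) + ∑ k ∈ range (t-2), myf (k+1))
        ≤ 2 + (7/6) * 6 := by nlinarith
      _ = 9 := by norm_num
  calc ∑ j ∈ (Finset.Ioo 0 t).filter (fun j : ℕ => 0 < (j : ℝ) + a),
        (t.choose j : ℝ) * (a + (j : ℝ)) ^ (j - 1) * (b + (t : ℝ) - (j : ℝ)) ^ (t - j - 1)
      ≤ ∑ j ∈ (Finset.Ioo 0 t).filter (fun j : ℕ => 0 < (j : ℝ) + a),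
          B j * ((t:ℝ) + a + b)^(t-1) := Finset.sum_le_sum hkey
    _ ≤ ∑ j ∈ Finset.Ioo 0 t, B j * ((t:ℝ) + a + b)^(t-1) := by
        apply Finset.sum_le_sum_of_subset_of_nonneg (Finset.filter_subset _ _)
        intro j _ _
        exact mul_nonneg (hB0 j) hSpow
    _ = (∑ j ∈ Finset.Ioo 0 t, B j) * ((t:ℝ) + a + b)^(t-1) := (Finset.sum_mul _ _ _).symm
    _ ≤ 9 * ((t:ℝ) + a + b)^(t-1) := mul_le_mul_of_nonneg_right hsumB hSpow
    _ ≤ Real.exp 4 * ((t:ℝ) + a + b)^(t-1) := mul_le_mul_of_nonneg_right my_nine_le_exp hSpow
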